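/- There is an absolute constant C < ∞ such that for every nonnegative integer k and positive integers n, N with k ≤ n ≤ N/3: C(n,k)·C(N−n, n−k) / C(N,n) ≤ (C·n / (√(k ∨ 1) · ((n−k) ∨ 1))) · exp( k·log(n²/(N·k)) − 2N·h((N−n)/N) + 2n·h((n−k)/n) + N·h((N−2n+k)/N) ), where the term k·log(n²/(N·k)) is interpreted as 0 when k = 0. -/

import Mathlib

open Real
open Nat

noncomputable section

/-- The entropy-type function h(x) = x log(1/x) (with h(0) = 0, using `Real.log 0 = 0`). -/
def hfun (x : ℝ) : ℝ := x * Real.log (1 / x)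


lemma stirlingSeq_ge (m : ℕ) : Real.sqrt π ≤ Stirling.stirlingSeq (m+1) := by
  have h2 := Stirling.tendsto_stirlingSeq_sqrt_pi
  have : Real.sqrt π ≤ (Stirling.stirlingSeq ∘ Nat.succ) m :=
    Stirling.stirlingSeq'_antitone.le_of_tendsto
      ((Filter.tendsto_add_atTop_iff_nat 1).2 h2) m
  simpa using this

lemma stirlingSeq_le (m : ℕ) : Stirling.stirlingSeq (m+1) ≤ Real.exp 1 / Real.sqrt 2 := by
  have := Stirling.stirlingSeq'_antitone (Nat.zero_le m)
  simpa [Stirling.stirlingSeq_one] using this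

lemma factorial_upper (m : ℕ) (hm : 1 ≤ m) :
    (m ! : ℝ) ≤ Real.exp 1 * Real.sqrt m * (m / Real.exp 1)^m := by
  obtain ⟨m, rfl⟩ := Nat.exists_eq_succ_of_ne_zero (by omega : m ≠ 0)
  have h := stirlingSeq_le m
  rw [Stirling.stirlingSeq] at h
  push_cast at h ⊢
  have hD : (0:ℝ) < Real.sqrt (2*((m:ℝ)+1)) * (((m:ℝ)+1)/Real.exp 1)^(m+1) := by positivity
  rw [div_le_iff₀ hD] at h
  calc ((m+1)! : ℝ) ≤ Real.exp 1 / Real.sqrt 2 * (Real.sqrt (2*((m:ℝ)+1)) * (((m:ℝ)+1)/Real.exp 1)^(m+1)) := h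
    _ = Real.exp 1 * Real.sqrt ((m:ℝ)+1) * (((m:ℝ)+1)/Real.exp 1)^(m+1) := by
        rw [Real.sqrt_mul (by norm_num : (0:ℝ) ≤ 2)]
        have h2 : Real.sqrt 2 ≠ 0 := by positivity
        field_simp

lemma factorial_lower (m : ℕ) (hm : 1 ≤ m) :
    Real.sqrt m * (m / Real.exp 1)^m ≤ (m ! : ℝ) := by
  obtain ⟨m, rfl⟩ := Nat.exists_eq_succ_of_ne_zero (by omega : m ≠ 0)
  have h := stirlingSeq_ge m
  rw [Stirling.stirlingSeq] at h
  push_cast at h ⊢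
  have hD : (0:ℝ) < Real.sqrt (2*((m:ℝ)+1)) * (((m:ℝ)+1)/Real.exp 1)^(m+1) := by positivity
  rw [le_div_iff₀ hD] at h
  calc Real.sqrt ((m:ℝ)+1) * (((m:ℝ)+1)/Real.exp 1)^(m+1)
      ≤ Real.sqrt π * (Real.sqrt (2*((m:ℝ)+1)) * (((m:ℝ)+1)/Real.exp 1)^(m+1)) := by
        have h1 : Real.sqrt ((m:ℝ)+1) ≤ Real.sqrt (2*((m:ℝ)+1)) := by
          apply Real.sqrt_le_sqrt; nlinarith [Nat.cast_nonneg (α := ℝ) m]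
        have h2 : (1:ℝ) ≤ Real.sqrt π := by
          rw [show (1:ℝ) = Real.sqrt 1 by simp]
          exact Real.sqrt_le_sqrt (by nlinarith [Real.pi_gt_three])
        nlinarith [Real.sqrt_nonneg ((m:ℝ)+1), pow_pos (div_pos (by positivity : (0:ℝ) < (m:ℝ)+1) (Real.exp_pos 1)) (m+1), Real.sqrt_nonneg (2*((m:ℝ)+1))]
    _ ≤ ((m+1)! : ℝ) := h

set_option maxHeartbeats 1000000 in
lemma choose_upper {m j i : ℕ} (hm : j + i = m) (h1 : 1 ≤ m) :
    (m.choose j : ℝ) ≤ Real.exp 1 * (Real.sqrt m / (Real.sqrt (max (j:ℝ) 1) * Real.sqrt (max (i:ℝ) 1)))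
      * ((m:ℝ)^m / ((j:ℝ)^j * (i:ℝ)^i)) := by
  subst hm
  have hone : (1:ℝ) ≤ Real.exp 1 := by nlinarith [Real.exp_one_gt_d9]
  rcases Nat.eq_zero_or_pos j with hj | hj
  · subst hj
    simp only [Nat.zero_add] at h1 ⊢
    have h1' : (1:ℝ) ≤ (i:ℝ) := by exact_mod_cast h1
    have hs : Real.sqrt (i:ℝ) ≠ 0 := ne_of_gt (Real.sqrt_pos.2 (by linarith))
    have hp : ((i:ℝ))^i ≠ 0 := ne_of_gt (pow_pos (by linarith) i)
    simp only [Nat.choose_zero_right, Nat.cast_one, Nat.cast_zero, pow_zero, one_mul,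
      max_eq_right (zero_le_one (α := ℝ)), Real.sqrt_one, max_eq_left h1',
      div_self hs, div_self hp, mul_one]
    exact hone
  rcases Nat.eq_zero_or_pos i with hi | hi
  · subst hi
    simp only [Nat.add_zero] at h1 ⊢
    have h1' : (1:ℝ) ≤ (j:ℝ) := by exact_mod_cast h1
    have hs : Real.sqrt (j:ℝ) ≠ 0 := ne_of_gt (Real.sqrt_pos.2 (by linarith))
    have hp : ((j:ℝ))^j ≠ 0 := ne_of_gt (pow_pos (by linarith) j)
    simp only [Nat.choose_self, Nat.cast_one, Nat.cast_zero, pow_zero, mul_one,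
      max_eq_right (zero_le_one (α := ℝ)), Real.sqrt_one, max_eq_left h1',
      div_self hs, div_self hp]
    exact hone
  -- main case
  have hj1 : (1:ℝ) ≤ (j:ℝ) := by exact_mod_cast hj
  have hi1 : (1:ℝ) ≤ (i:ℝ) := by exact_mod_cast hi
  rw [max_eq_left hj1, max_eq_left hi1]
  have hkey : (j+i).choose j * j ! * i ! = (j+i)! := by
    have := Nat.choose_mul_factorial_mul_factorial (Nat.le_add_right j i)
    simpa [Nat.add_sub_cancel_left] using this
  have hfact : ((j+i).choose j : ℝ) = ((j+i)! : ℝ) / ((j ! : ℝ) * (i ! : ℝ)) := by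
    rw [eq_div_iff (by positivity)]
    exact_mod_cast (mul_assoc ((j+i).choose j) (j !) (i !)).symm.trans hkey
  rw [hfact]
  have hjp : (0:ℝ) < (j:ℝ) := by linarith
  have hip : (0:ℝ) < (i:ℝ) := by linarith
  have hden : (0:ℝ) < (Real.sqrt j * ((j:ℝ)/Real.exp 1)^j) * (Real.sqrt i * ((i:ℝ)/Real.exp 1)^i) := by positivity
  calc ((j+i)! : ℝ) / ((j ! : ℝ) * (i ! : ℝ))
      ≤ (Real.exp 1 * Real.sqrt ((j+i:ℕ):ℝ) * (((j+i:ℕ):ℝ)/Real.exp 1)^(j+i)) /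
        ((Real.sqrt j * ((j:ℝ)/Real.exp 1)^j) * (Real.sqrt i * ((i:ℝ)/Real.exp 1)^i)) := by
        apply div_le_div₀ (by positivity) (factorial_upper _ h1) hden
        exact mul_le_mul (factorial_lower j hj) (factorial_lower i hi) (by positivity) (by positivity)
    _ = Real.exp 1 * (Real.sqrt ((j+i:ℕ):ℝ) / (Real.sqrt (j:ℝ) * Real.sqrt (i:ℝ)))
        * (((j+i:ℕ):ℝ)^(j+i) / ((j:ℝ)^j * (i:ℝ)^i)) := by
        rw [div_pow, div_pow, div_pow, pow_add (Real.exp 1) j i]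
        have e0 : Real.exp 1 ≠ 0 := Real.exp_ne_zero 1
        have hsj : Real.sqrt (j:ℝ) ≠ 0 := ne_of_gt (Real.sqrt_pos.2 hjp)
        have hsi : Real.sqrt (i:ℝ) ≠ 0 := ne_of_gt (Real.sqrt_pos.2 hip)
        have hpj : ((j:ℝ))^j ≠ 0 := ne_of_gt (pow_pos hjp j)
        have hpi : ((i:ℝ))^i ≠ 0 := ne_of_gt (pow_pos hip i)
        have hej : (Real.exp 1)^j ≠ 0 := pow_ne_zero _ e0
        have hei : (Real.exp 1)^i ≠ 0 := pow_ne_zero _ e0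
        field_simp

set_option maxHeartbeats 1000000 in
lemma choose_lower {m j i : ℕ} (hm : j + i = m) (hj : 1 ≤ j) (hi : 1 ≤ i) :
    (1/Real.exp 1^2) * (Real.sqrt m / (Real.sqrt (j:ℝ) * Real.sqrt (i:ℝ)))
      * ((m:ℝ)^m / ((j:ℝ)^j * (i:ℝ)^i)) ≤ (m.choose j : ℝ) := by
  subst hm
  have hj1 : (1:ℝ) ≤ (j:ℝ) := by exact_mod_cast hj
  have hi1 : (1:ℝ) ≤ (i:ℝ) := by exact_mod_cast hi
  have hjp : (0:ℝ) < (j:ℝ) := by linarith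
  have hip : (0:ℝ) < (i:ℝ) := by linarith
  have hkey : (j+i).choose j * j ! * i ! = (j+i)! := by
    have := Nat.choose_mul_factorial_mul_factorial (Nat.le_add_right j i)
    simpa [Nat.add_sub_cancel_left] using this
  have hfact : ((j+i).choose j : ℝ) = ((j+i)! : ℝ) / ((j ! : ℝ) * (i ! : ℝ)) := by
    rw [eq_div_iff (by positivity)]
    exact_mod_cast (mul_assoc ((j+i).choose j) (j !) (i !)).symm.trans hkey
  rw [hfact, le_div_iff₀ (by positivity)]
  have hL0 : (0:ℝ) ≤ (1/Real.exp 1^2) * (Real.sqrt ((j+i:ℕ):ℝ) / (Real.sqrt (j:ℝ) * Real.sqrt (i:ℝ)))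
      * (((j+i:ℕ):ℝ)^(j+i) / ((j:ℝ)^j * (i:ℝ)^i)) := by positivity
  calc (1/Real.exp 1^2) * (Real.sqrt ((j+i:ℕ):ℝ) / (Real.sqrt (j:ℝ) * Real.sqrt (i:ℝ)))
      * (((j+i:ℕ):ℝ)^(j+i) / ((j:ℝ)^j * (i:ℝ)^i)) * ((j ! : ℝ) * (i ! : ℝ))
      ≤ (1/Real.exp 1^2) * (Real.sqrt ((j+i:ℕ):ℝ) / (Real.sqrt (j:ℝ) * Real.sqrt (i:ℝ)))
      * (((j+i:ℕ):ℝ)^(j+i) / ((j:ℝ)^j * (i:ℝ)^i)) *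
        ((Real.exp 1 * Real.sqrt j * ((j:ℝ)/Real.exp 1)^j) * (Real.exp 1 * Real.sqrt i * ((i:ℝ)/Real.exp 1)^i)) := by
        apply mul_le_mul_of_nonneg_left _ hL0
        exact mul_le_mul (factorial_upper j hj) (factorial_upper i hi) (by positivity) (by positivity)
    _ = Real.sqrt ((j+i:ℕ):ℝ) * (((j+i:ℕ):ℝ)/Real.exp 1)^(j+i) := by
        rw [div_pow, div_pow, div_pow, pow_add (Real.exp 1) j i]
        have e0 : Real.exp 1 ≠ 0 := Real.exp_ne_zero 1
        have hsj : Real.sqrt (j:ℝ) ≠ 0 := ne_of_gt (Real.sqrt_pos.2 hjp)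
        have hsi : Real.sqrt (i:ℝ) ≠ 0 := ne_of_gt (Real.sqrt_pos.2 hip)
        have hpj : ((j:ℝ))^j ≠ 0 := ne_of_gt (pow_pos hjp j)
        have hpi : ((i:ℝ))^i ≠ 0 := ne_of_gt (pow_pos hip i)
        have hej : (Real.exp 1)^j ≠ 0 := pow_ne_zero _ e0
        have hei : (Real.exp 1)^i ≠ 0 := pow_ne_zero _ e0
        field_simp
    _ ≤ ((j+i)! : ℝ) := factorial_lower _ (by omega)

lemma scalar_core (pn pc pN pd pa pb rn mb : ℝ)
    (hpN : 0 ≤ pN) (hpd1 : 1 ≤ pd) (hpa1 : 1 ≤ pa) (hpb1 : 1 ≤ pb)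
    (hrn : pn * pn = rn) (hmb : pb * pb = mb) (hpn1 : 1 ≤ pn) (hpc1 : 1 ≤ pc)
    (key : pc * pc ≤ 1.74 * (pN * pd)) :
    Real.exp 1^2 * (pn * pc) / (pa * pb * pb * pd) ≤
      1000 / Real.exp 1^2 * rn * pN / (pa * mb * pn * pc) := by
  subst hrn hmb
  have hpa0 : (0:ℝ) < pa := lt_of_lt_of_le one_pos hpa1
  have hpb0 : (0:ℝ) < pb := lt_of_lt_of_le one_pos hpb1
  have hpd0 : (0:ℝ) < pd := lt_of_lt_of_le one_pos hpd1
  have hpn0 : (0:ℝ) < pn := lt_of_lt_of_le one_pos hpn1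
  have hpc0 : (0:ℝ) < pc := lt_of_lt_of_le one_pos hpc1
  rw [div_le_div_iff₀ (mul_pos (mul_pos (mul_pos hpa0 hpb0) hpb0) hpd0)
    (mul_pos (mul_pos (mul_pos hpa0 (mul_pos hpb0 hpb0)) hpn0) hpc0)]
  have he2 : Real.exp 1^2 ≤ 7.389057 := by nlinarith [Real.exp_one_lt_d9, Real.exp_pos 1]
  have h2 : 1.74 * Real.exp 1^2 ≤ 1000 / Real.exp 1^2 := by
    rw [le_div_iff₀ (by positivity)]
    nlinarith [Real.exp_pos 1]
  have hfac : (0:ℝ) ≤ pa * pb * pb * (pn * pn) :=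
    le_of_lt (mul_pos (mul_pos (mul_pos hpa0 hpb0) hpb0) (mul_pos hpn0 hpn0))
  have hpNd : (0:ℝ) ≤ pN * pd := mul_nonneg hpN (le_of_lt hpd0)
  calc Real.exp 1^2 * (pn * pc) * (pa * (pb * pb) * pn * pc)
      = (Real.exp 1^2 * (pc * pc)) * (pa * pb * pb * (pn * pn)) := by ring
    _ ≤ (Real.exp 1^2 * (1.74 * (pN * pd))) * (pa * pb * pb * (pn * pn)) :=
        mul_le_mul_of_nonneg_right (mul_le_mul_of_nonneg_left key (by positivity)) hfac
    _ = (1.74 * Real.exp 1^2) * ((pN * pd) * (pa * pb * pb * (pn * pn))) := by ring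
    _ ≤ (1000 / Real.exp 1^2) * ((pN * pd) * (pa * pb * pb * (pn * pn))) :=
        mul_le_mul_of_nonneg_right h2 (mul_nonneg hpNd hfac)
    _ = 1000 / Real.exp 1^2 * (pn * pn) * pN * (pa * pb * pb * pd) := by ring

lemma prod_eq1 (e pn pc pa pb pd A C K B D : ℝ) (k b d n c : ℕ)
    (hK : K^k ≠ 0) (hB : B^b ≠ 0) (hD : D^d ≠ 0)
    (hpa : pa ≠ 0) (hpb : pb ≠ 0) (hpd : pd ≠ 0) :
    (e * (pn/(pa*pb)) * (A^n/(K^k*B^b))) * (e * (pc/(pb*pd)) * (C^c/(B^b*D^d)))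
      = (e^2*(pn*pc)/(pa*pb*pb*pd)) * (A^n*C^c/(K^k*(B^b*B^b)*D^d)) := by
  field_simp

lemma prod_eq2 (e pn pc pN pa mb A C NN K B D : ℝ) (k b d : ℕ)
    (hK : K^k ≠ 0) (hB : B^(2*b) ≠ 0) (hD : D^d ≠ 0) (hA : A^(k+b) ≠ 0) (hC : C^(b+d) ≠ 0)
    (hNk : NN^k ≠ 0) (hN2 : NN^(2*(b+d)) ≠ 0) (hC2 : C^(2*(b+d)) ≠ 0)
    (hpa : pa ≠ 0) (hmb : mb ≠ 0) (hpn : pn ≠ 0) (hpc : pc ≠ 0) (he : e ≠ 0) :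
    (1000 / e^2 * A * pN / (pa * mb * pn * pc)) * (A^(k+b) * C^(b+d) / (K^k * (B^b*B^b) * D^d))
      = (1000 * A / (pa * mb) *
          (A^(2*k)/(NN^k*K^k) / (NN^(2*(b+d))/C^(2*(b+d))) * (A^(2*b)/B^(2*b)) * (NN^d/D^d))) *
        ((1/e^2) * (pN/(pn*pc)) * (NN^(k+2*b+d)/(A^(k+b)*C^(b+d)))) := by
  have hBB : B^b * B^b = B^(2*b) := by rw [two_mul, pow_add]
  have hAA : A^(2*k) * A^(2*b) = A^(k+b) * A^(k+b) := by
    rw [← pow_add, ← pow_add]; ring_nf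
  have hNN : NN^d * NN^(k+2*b+d) = NN^k * NN^(2*(b+d)) := by
    rw [← pow_add, ← pow_add]; ring_nf
  have hCC : C^(2*(b+d)) = C^(b+d) * C^(b+d) := by rw [two_mul, pow_add]
  field_simp
  rw [div_eq_iff (by simp_all [mul_eq_zero])]
  ring

set_option maxHeartbeats 3000000 in
/-- **Asymptotics of binomial coefficients (full form).**  There is an absolute constant
C < ∞ such that for all integers 0 ≤ k ≤ n ≤ N/3 (n, N positive),
`C(n,k) C(N−n,n−k) / C(N,n)` is at most
`(C n / (√(k∨1) ((n−k)∨1))) exp(k log(n²/(Nk)) − 2N h((N−n)/N) + 2n h((n−k)/n) + N h((N−2n+k)/N))`,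
where `k log(n²/(Nk))` is interpreted as 0 for k = 0. -/
theorem binom_asymptotics_full :
    ∃ C : ℝ, 0 < C ∧ ∀ k n N : ℕ, 0 < n → 0 < N → k ≤ n → 3 * n ≤ N →
      ((n.choose k : ℝ) * ((N - n).choose (n - k) : ℝ)) / (N.choose n : ℝ) ≤
        C * n / (Real.sqrt (max (k : ℝ) 1) * max ((n : ℝ) - k) 1) *
          Real.exp ((k : ℝ) * Real.log ((n : ℝ) ^ 2 / (N * k))
            - 2 * N * hfun (((N : ℝ) - n) / N)
            + 2 * n * hfun (((n : ℝ) - k) / n)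
            + N * hfun (((N : ℝ) - 2 * n + k) / N)) := by
  refine ⟨1000, by norm_num, ?_⟩
  intro k n N hn hN hkn h3n
  obtain ⟨b, rfl⟩ : ∃ b, n = k + b := ⟨n - k, by omega⟩
  obtain ⟨d, rfl⟩ : ∃ d, N = k + 2*b + d := ⟨N - (k + 2*b), by omega⟩
  have hd : 2*k + b ≤ d := by omega
  have hd1 : 1 ≤ d := by omega
  have hn1 : 1 ≤ k + b := hn
  have hc1 : 1 ≤ b + d := by omega
  -- clean up nat subtractions and real subtractions
  rw [show k+2*b+d - (k+b) = b+d from by omega,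
      show (k+b) - k = b from by omega,
      show ((k+2*b+d:ℕ):ℝ) - ((k+b:ℕ):ℝ) = ((b+d:ℕ):ℝ) from by push_cast; ring,
      show ((k+b:ℕ):ℝ) - ((k:ℕ):ℝ) = ((b:ℕ):ℝ) from by push_cast; ring,
      show ((k+2*b+d:ℕ):ℝ) - 2*((k+b:ℕ):ℝ) + ((k:ℕ):ℝ) = ((d:ℕ):ℝ) from by push_cast; ring]
  -- positivity facts
  have hN0 : (0:ℝ) < ((k+2*b+d:ℕ):ℝ) := by exact_mod_cast hN
  have hn0 : (0:ℝ) < ((k+b:ℕ):ℝ) := by exact_mod_cast hn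
  have hc0 : (0:ℝ) < ((b+d:ℕ):ℝ) := by exact_mod_cast (by omega : 0 < b + d)
  have hd0 : (0:ℝ) < ((d:ℕ):ℝ) := by exact_mod_cast hd1
  have hkk : (0:ℝ) < ((k:ℕ):ℝ)^k := by
    rcases Nat.eq_zero_or_pos k with h0 | h0
    · subst h0; simp
    · exact pow_pos (by exact_mod_cast h0) k
  have hbb : (0:ℝ) < ((b:ℕ):ℝ)^b := by
    rcases Nat.eq_zero_or_pos b with h0 | h0
    · subst h0; simp
    · exact pow_pos (by exact_mod_cast h0) b
  have hbb2 : (0:ℝ) < ((b:ℕ):ℝ)^(2*b) := by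
    rcases Nat.eq_zero_or_pos b with h0 | h0
    · subst h0; simp
    · exact pow_pos (by exact_mod_cast h0) _
  have hdd : (0:ℝ) < ((d:ℕ):ℝ)^d := pow_pos hd0 d
  -- the four exp computations
  have e1 : Real.exp ((k:ℝ) * Real.log (((k+b:ℕ):ℝ)^2 / (((k+2*b+d:ℕ):ℝ) * (k:ℝ)))) =
      ((k+b:ℕ):ℝ)^(2*k) / (((k+2*b+d:ℕ):ℝ)^k * ((k:ℕ):ℝ)^k) := by
    rcases Nat.eq_zero_or_pos k with h0 | h0
    · subst h0; simp
    · have hk0 : (0:ℝ) < (k:ℝ) := by exact_mod_cast h0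
      have hx : (0:ℝ) < ((k+b:ℕ):ℝ)^2 / (((k+2*b+d:ℕ):ℝ) * (k:ℝ)) := by positivity
      rw [Real.exp_nat_mul, Real.exp_log hx, div_pow, mul_pow, ← pow_mul]
  have e2 : Real.exp (2 * ((k+2*b+d:ℕ):ℝ) * hfun (((b+d:ℕ):ℝ) / ((k+2*b+d:ℕ):ℝ))) =
      ((k+2*b+d:ℕ):ℝ)^(2*(b+d)) / ((b+d:ℕ):ℝ)^(2*(b+d)) := by
    have harg : (0:ℝ) < ((k+2*b+d:ℕ):ℝ) / ((b+d:ℕ):ℝ) := div_pos hN0 hc0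
    have ht : 2 * ((k+2*b+d:ℕ):ℝ) * hfun (((b+d:ℕ):ℝ) / ((k+2*b+d:ℕ):ℝ)) =
        ((2*(b+d):ℕ):ℝ) * Real.log (((k+2*b+d:ℕ):ℝ) / ((b+d:ℕ):ℝ)) := by
      simp only [hfun, one_div_div]
      push_cast
      field_simp
    rw [ht, Real.exp_nat_mul, Real.exp_log harg, div_pow]
  have e3 : Real.exp (2 * ((k+b:ℕ):ℝ) * hfun (((b:ℕ):ℝ) / ((k+b:ℕ):ℝ))) =
      ((k+b:ℕ):ℝ)^(2*b) / ((b:ℕ):ℝ)^(2*b) := by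
    rcases Nat.eq_zero_or_pos b with h0 | h0
    · subst h0; simp [hfun]
    · have hb0 : (0:ℝ) < (b:ℝ) := by exact_mod_cast h0
      have harg : (0:ℝ) < ((k+b:ℕ):ℝ) / ((b:ℕ):ℝ) := div_pos hn0 hb0
      have ht : 2 * ((k+b:ℕ):ℝ) * hfun (((b:ℕ):ℝ) / ((k+b:ℕ):ℝ)) =
          ((2*b:ℕ):ℝ) * Real.log (((k+b:ℕ):ℝ) / ((b:ℕ):ℝ)) := by
        simp only [hfun, one_div_div]
        push_cast
        field_simp
      rw [ht, Real.exp_nat_mul, Real.exp_log harg, div_pow]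
  have e4 : Real.exp (((k+2*b+d:ℕ):ℝ) * hfun (((d:ℕ):ℝ) / ((k+2*b+d:ℕ):ℝ))) =
      ((k+2*b+d:ℕ):ℝ)^d / ((d:ℕ):ℝ)^d := by
    have harg : (0:ℝ) < ((k+2*b+d:ℕ):ℝ) / ((d:ℕ):ℝ) := div_pos hN0 hd0
    have ht : ((k+2*b+d:ℕ):ℝ) * hfun (((d:ℕ):ℝ) / ((k+2*b+d:ℕ):ℝ)) =
        ((d:ℕ):ℝ) * Real.log (((k+2*b+d:ℕ):ℝ) / ((d:ℕ):ℝ)) := by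
      simp only [hfun, one_div_div]
      field_simp
    rw [ht, Real.exp_nat_mul, Real.exp_log harg, div_pow]
  -- sqrt facts
  have hpa1 : (1:ℝ) ≤ Real.sqrt (max (k:ℝ) 1) := by
    have h := Real.sqrt_le_sqrt (le_max_right ((k:ℝ)) 1)
    rwa [Real.sqrt_one] at h
  have hpb1 : (1:ℝ) ≤ Real.sqrt (max (b:ℝ) 1) := by
    have h := Real.sqrt_le_sqrt (le_max_right ((b:ℝ)) 1)
    rwa [Real.sqrt_one] at h
  have hpd1 : (1:ℝ) ≤ Real.sqrt (max (d:ℝ) 1) := by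
    have h := Real.sqrt_le_sqrt (le_max_right ((d:ℝ)) 1)
    rwa [Real.sqrt_one] at h
  have hpn1 : (1:ℝ) ≤ Real.sqrt ((k+b:ℕ):ℝ) := by
    have h := Real.sqrt_le_sqrt (show (1:ℝ) ≤ ((k+b:ℕ):ℝ) by exact_mod_cast hn1)
    rwa [Real.sqrt_one] at h
  have hpc1 : (1:ℝ) ≤ Real.sqrt ((b+d:ℕ):ℝ) := by
    have h := Real.sqrt_le_sqrt (show (1:ℝ) ≤ ((b+d:ℕ):ℝ) by exact_mod_cast hc1)
    rwa [Real.sqrt_one] at h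
  have hpa0 : (0:ℝ) < Real.sqrt (max (k:ℝ) 1) := lt_of_lt_of_le one_pos hpa1
  have hpb0 : (0:ℝ) < Real.sqrt (max (b:ℝ) 1) := lt_of_lt_of_le one_pos hpb1
  have hpd0 : (0:ℝ) < Real.sqrt (max (d:ℝ) 1) := lt_of_lt_of_le one_pos hpd1
  have hpn0 : (0:ℝ) < Real.sqrt ((k+b:ℕ):ℝ) := lt_of_lt_of_le one_pos hpn1
  have hpc0 : (0:ℝ) < Real.sqrt ((b+d:ℕ):ℝ) := lt_of_lt_of_le one_pos hpc1
  have hmb0 : (0:ℝ) < max ((b:ℕ):ℝ) 1 := lt_of_lt_of_le one_pos (le_max_right _ _)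
  -- key numeric inequality
  have key : Real.sqrt ((b+d:ℕ):ℝ) * Real.sqrt ((b+d:ℕ):ℝ) ≤
      1.74 * (Real.sqrt ((k+2*b+d:ℕ):ℝ) * Real.sqrt (max (d:ℝ) 1)) := by
    rw [Real.mul_self_sqrt (Nat.cast_nonneg _),
        max_eq_left (by exact_mod_cast hd1 : (1:ℝ) ≤ (d:ℝ)),
        ← Real.sqrt_mul (Nat.cast_nonneg _)]
    have hbd' : ((b:ℕ):ℝ) ≤ ((d:ℕ):ℝ) := by exact_mod_cast (by omega : b ≤ d)
    have hsq : ((b+d:ℕ):ℝ)^2 ≤ 3 * (((k+2*b+d:ℕ):ℝ) * ((d:ℕ):ℝ)) := by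
      push_cast
      nlinarith [Nat.cast_nonneg (α := ℝ) k, Nat.cast_nonneg (α := ℝ) b,
        Nat.cast_nonneg (α := ℝ) d, mul_nonneg (Nat.cast_nonneg (α := ℝ) k) (Nat.cast_nonneg (α := ℝ) d),
        mul_le_mul_of_nonneg_left hbd' (Nat.cast_nonneg (α := ℝ) b)]
    have hnn : (0:ℝ) ≤ ((k+2*b+d:ℕ):ℝ) * ((d:ℕ):ℝ) := by positivity
    have hs := Real.sq_sqrt hnn
    nlinarith [Real.sqrt_nonneg (((k+2*b+d:ℕ):ℝ) * ((d:ℕ):ℝ)), Nat.cast_nonneg (α := ℝ) (b+d)]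
  have hcore := scalar_core (Real.sqrt ((k+b:ℕ):ℝ)) (Real.sqrt ((b+d:ℕ):ℝ))
    (Real.sqrt ((k+2*b+d:ℕ):ℝ)) (Real.sqrt (max (d:ℝ) 1)) (Real.sqrt (max (k:ℝ) 1))
    (Real.sqrt (max (b:ℝ) 1)) ((k+b:ℕ):ℝ) (max ((b:ℕ):ℝ) 1)
    (Real.sqrt_nonneg _) hpd1 hpa1 hpb1
    (Real.mul_self_sqrt (Nat.cast_nonneg _)) (Real.mul_self_sqrt (le_of_lt hmb0)) hpn1 hpc1 key
  -- choose bounds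
  have hU1 := choose_upper (rfl : k + b = k + b) hn1
  have hU2 := choose_upper (rfl : b + d = b + d) hc1
  have hLc := choose_lower (show (k+b) + (b+d) = k+2*b+d from by omega) hn1 hc1
  have hX3 : (0:ℝ) < ((k+2*b+d).choose (k+b) : ℝ) := by
    exact_mod_cast Nat.choose_pos (by omega : k + b ≤ k+2*b+d)
  rw [div_le_iff₀ hX3]
  have hU1nn : (0:ℝ) ≤ Real.exp 1 * (Real.sqrt ((k+b:ℕ):ℝ) / (Real.sqrt (max (k:ℝ) 1) * Real.sqrt (max (b:ℝ) 1)))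
      * (((k+b:ℕ):ℝ)^(k+b) / (((k:ℕ):ℝ)^k * ((b:ℕ):ℝ)^b)) := by positivity
  have hRnn : (0:ℝ) ≤ 1000 * ((k+b:ℕ):ℝ) / (Real.sqrt (max (k:ℝ) 1) * max ((b:ℕ):ℝ) 1) *
      Real.exp ((k:ℝ) * Real.log (((k+b:ℕ):ℝ)^2 / (((k+2*b+d:ℕ):ℝ) * (k:ℝ)))
        - 2 * ((k+2*b+d:ℕ):ℝ) * hfun (((b+d:ℕ):ℝ) / ((k+2*b+d:ℕ):ℝ))
        + 2 * ((k+b:ℕ):ℝ) * hfun (((b:ℕ):ℝ) / ((k+b:ℕ):ℝ))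
        + ((k+2*b+d:ℕ):ℝ) * hfun (((d:ℕ):ℝ) / ((k+2*b+d:ℕ):ℝ))) := by
    apply mul_nonneg
    · apply div_nonneg (by positivity)
      exact mul_nonneg (Real.sqrt_nonneg _) (le_of_lt hmb0)
    · exact le_of_lt (Real.exp_pos _)
  have hkk' : ((k:ℕ):ℝ)^k ≠ 0 := ne_of_gt hkk
  have hbb' : ((b:ℕ):ℝ)^b ≠ 0 := ne_of_gt hbb
  have hbb2' : ((b:ℕ):ℝ)^(2*b) ≠ 0 := ne_of_gt hbb2
  have hdd' : ((d:ℕ):ℝ)^d ≠ 0 := ne_of_gt hdd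
  have hpa0' : Real.sqrt (max (k:ℝ) 1) ≠ 0 := ne_of_gt hpa0
  have hpb0' : Real.sqrt (max (b:ℝ) 1) ≠ 0 := ne_of_gt hpb0
  have hpd0' : Real.sqrt (max (d:ℝ) 1) ≠ 0 := ne_of_gt hpd0
  have hpn0' : Real.sqrt ((k+b:ℕ):ℝ) ≠ 0 := ne_of_gt hpn0
  have hpc0' : Real.sqrt ((b+d:ℕ):ℝ) ≠ 0 := ne_of_gt hpc0
  have hmb0' : max ((b:ℕ):ℝ) 1 ≠ 0 := ne_of_gt hmb0
  have hexp0 : Real.exp 1 ≠ 0 := Real.exp_ne_zero 1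
  have hQ0 : (0:ℝ) ≤ ((k+b:ℕ):ℝ)^(k+b) * ((b+d:ℕ):ℝ)^(b+d) /
      (((k:ℕ):ℝ)^k * (((b:ℕ):ℝ)^b * ((b:ℕ):ℝ)^b) * ((d:ℕ):ℝ)^d) := by positivity
  calc (((k+b).choose k : ℝ) * (((b+d).choose b : ℕ) : ℝ))
      ≤ (Real.exp 1 * (Real.sqrt ((k+b:ℕ):ℝ) / (Real.sqrt (max (k:ℝ) 1) * Real.sqrt (max (b:ℝ) 1)))
          * (((k+b:ℕ):ℝ)^(k+b) / (((k:ℕ):ℝ)^k * ((b:ℕ):ℝ)^b))) *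
        (Real.exp 1 * (Real.sqrt ((b+d:ℕ):ℝ) / (Real.sqrt (max (b:ℝ) 1) * Real.sqrt (max (d:ℝ) 1)))
          * (((b+d:ℕ):ℝ)^(b+d) / (((b:ℕ):ℝ)^b * ((d:ℕ):ℝ)^d))) :=
        mul_le_mul hU1 hU2 (Nat.cast_nonneg _) hU1nn
    _ = (Real.exp 1^2 * (Real.sqrt ((k+b:ℕ):ℝ) * Real.sqrt ((b+d:ℕ):ℝ)) /
          (Real.sqrt (max (k:ℝ) 1) * Real.sqrt (max (b:ℝ) 1) * Real.sqrt (max (b:ℝ) 1) * Real.sqrt (max (d:ℝ) 1))) *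
        (((k+b:ℕ):ℝ)^(k+b) * ((b+d:ℕ):ℝ)^(b+d) /
          (((k:ℕ):ℝ)^k * (((b:ℕ):ℝ)^b * ((b:ℕ):ℝ)^b) * ((d:ℕ):ℝ)^d)) :=
        prod_eq1 _ _ _ _ _ _ _ _ _ _ _ _ _ _ _ _ hkk' hbb' hdd' hpa0' hpb0' hpd0'
    _ ≤ (1000 / Real.exp 1^2 * ((k+b:ℕ):ℝ) * Real.sqrt ((k+2*b+d:ℕ):ℝ) /
          (Real.sqrt (max (k:ℝ) 1) * max ((b:ℕ):ℝ) 1 * Real.sqrt ((k+b:ℕ):ℝ) * Real.sqrt ((b+d:ℕ):ℝ))) *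
        (((k+b:ℕ):ℝ)^(k+b) * ((b+d:ℕ):ℝ)^(b+d) /
          (((k:ℕ):ℝ)^k * (((b:ℕ):ℝ)^b * ((b:ℕ):ℝ)^b) * ((d:ℕ):ℝ)^d)) :=
        mul_le_mul_of_nonneg_right hcore hQ0
    _ = (1000 * ((k+b:ℕ):ℝ) / (Real.sqrt (max (k:ℝ) 1) * max ((b:ℕ):ℝ) 1) *
        Real.exp ((k:ℝ) * Real.log (((k+b:ℕ):ℝ)^2 / (((k+2*b+d:ℕ):ℝ) * (k:ℝ)))
          - 2 * ((k+2*b+d:ℕ):ℝ) * hfun (((b+d:ℕ):ℝ) / ((k+2*b+d:ℕ):ℝ))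
          + 2 * ((k+b:ℕ):ℝ) * hfun (((b:ℕ):ℝ) / ((k+b:ℕ):ℝ))
          + ((k+2*b+d:ℕ):ℝ) * hfun (((d:ℕ):ℝ) / ((k+2*b+d:ℕ):ℝ)))) *
        ((1/Real.exp 1^2) * (Real.sqrt ((k+2*b+d:ℕ):ℝ) / (Real.sqrt ((k+b:ℕ):ℝ) * Real.sqrt ((b+d:ℕ):ℝ)))
          * (((k+2*b+d:ℕ):ℝ)^(k+2*b+d) / (((k+b:ℕ):ℝ)^(k+b) * ((b+d:ℕ):ℝ)^(b+d)))) := by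
        rw [Real.exp_add, Real.exp_add, Real.exp_sub, e1, e2, e3, e4]
        have hnk : ((k+b:ℕ):ℝ)^(k+b) ≠ 0 := ne_of_gt (pow_pos hn0 _)
        have hck : ((b+d:ℕ):ℝ)^(b+d) ≠ 0 := ne_of_gt (pow_pos hc0 _)
        have hNk : ((k+2*b+d:ℕ):ℝ)^k ≠ 0 := ne_of_gt (pow_pos hN0 _)
        have hN2c : ((k+2*b+d:ℕ):ℝ)^(2*(b+d)) ≠ 0 := ne_of_gt (pow_pos hN0 _)
        have hC2 : ((b+d:ℕ):ℝ)^(2*(b+d)) ≠ 0 := ne_of_gt (pow_pos hc0 _)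
        exact prod_eq2 _ _ _ _ _ _ _ _ _ _ _ _ _ _ _ hkk' hbb2' hdd' hnk hck hNk hN2c hC2
          hpa0' hmb0' hpn0' hpc0' hexp0
    _ ≤ (1000 * ((k+b:ℕ):ℝ) / (Real.sqrt (max (k:ℝ) 1) * max ((b:ℕ):ℝ) 1) *
        Real.exp ((k:ℝ) * Real.log (((k+b:ℕ):ℝ)^2 / (((k+2*b+d:ℕ):ℝ) * (k:ℝ)))
          - 2 * ((k+2*b+d:ℕ):ℝ) * hfun (((b+d:ℕ):ℝ) / ((k+2*b+d:ℕ):ℝ))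
          + 2 * ((k+b:ℕ):ℝ) * hfun (((b:ℕ):ℝ) / ((k+b:ℕ):ℝ))
          + ((k+2*b+d:ℕ):ℝ) * hfun (((d:ℕ):ℝ) / ((k+2*b+d:ℕ):ℝ)))) *
        (((k+2*b+d).choose (k+b) : ℕ) : ℝ) :=
        mul_le_mul_of_nonneg_left hLc hRnn

end
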